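/- E[ exp(−s·Z·X^{1/α}) ] = (1 + (c/κ)·Γ(1−α)·s^α)^{−κ} for all s≥0. -/

import Mathlib

open MeasureTheory ProbabilityTheory Real Set
open scoped NNReal ENNReal

lemma gamma_laplace {κ l : ℝ} (hκ : 0 < κ) (hl : 0 ≤ l) :
    ∫ x, Real.exp (-(l * x)) ∂(gammaMeasure κ κ) = (1 + l / κ) ^ (-κ) := by
  have hklpos : 0 < κ + l := by linarith
  have hmeq : gammaMeasure κ κ
      = volume.withDensity (fun x => ((gammaPDFReal κ κ x).toNNReal : ℝ≥0∞)) := rfl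
  rw [hmeq, integral_withDensity_eq_integral_smul
      ((measurable_gammaPDFReal κ κ).real_toNNReal) _]
  have h1 : ∀ x : ℝ, (gammaPDFReal κ κ x).toNNReal • Real.exp (-(l * x))
      = Set.indicator (Ici (0:ℝ))
          (fun x => κ ^ κ / Real.Gamma κ * (x ^ (κ-1) * Real.exp (-((κ + l) * x)))) x := by
    intro x
    rw [NNReal.smul_def, smul_eq_mul]
    by_cases hx : 0 ≤ x
    · rw [Set.indicator_of_mem (Set.mem_Ici.mpr hx)]
      rw [Real.coe_toNNReal _ (gammaPDFReal_nonneg hκ hκ x)]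
      simp only [gammaPDFReal, if_pos hx]
      rw [mul_assoc, ← Real.exp_add]
      ring_nf
    · rw [Set.indicator_of_notMem (by simpa using hx)]
      simp only [gammaPDFReal, if_neg hx, NNReal.coe_zero]
      norm_num
  simp_rw [h1]
  rw [integral_indicator measurableSet_Ici, integral_Ici_eq_integral_Ioi,
    integral_const_mul, integral_rpow_mul_exp_neg_mul_Ioi hκ hklpos]
  have hΓ : Real.Gamma κ ≠ 0 := (Real.Gamma_pos_of_pos hκ).ne'
  rw [show κ ^ κ / Real.Gamma κ * ((1/(κ+l)) ^ κ * Real.Gamma κ)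
        = (1/(κ+l)) ^ κ * κ ^ κ by field_simp,
    ← Real.mul_rpow (by positivity) hκ.le,
    show 1/(κ+l) * κ = (1 + l/κ)⁻¹ by field_simp,
    Real.inv_rpow (by positivity), ← Real.rpow_neg (by positivity)]

theorem laplace_stable_gamma_mixture
    {Ω : Type*} [MeasureSpace Ω] [IsProbabilityMeasure (ℙ : Measure Ω)]
    (α c κ : ℝ) (hα : α ∈ Set.Ioo (0:ℝ) 1) (hc : 0 < c) (hκ : 0 < κ)
    (Z : Ω → ℝ) (hZmeas : Measurable Z) (hZpos : ∀ ω, 0 < Z ω)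
    (hZlaplace : ∀ s ≥ (0:ℝ),
      ∫ ω, Real.exp (-(s * Z ω)) = Real.exp (-(c * Real.Gamma (1 - α) * s ^ α)))
    (X : Ω → ℝ) (hXmeas : Measurable X)
    (hXdist : Measure.map X ℙ = ProbabilityTheory.gammaMeasure κ κ)
    (hindep : IndepFun Z X ℙ) :
    ∀ s ≥ (0:ℝ),
      ∫ ω, Real.exp (-(s * (Z ω * X ω ^ (1 / α))))
        = (1 + (c / κ) * Real.Gamma (1 - α) * s ^ α) ^ (-κ) := by
  intro s hs
  obtain ⟨hα0, hα1⟩ := hα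
  have hΓpos : 0 < Real.Gamma (1 - α) := Real.Gamma_pos_of_pos (by linarith)
  have hspow : 0 ≤ s ^ α := Real.rpow_nonneg hs α
  set l : ℝ := c * Real.Gamma (1 - α) * s ^ α with hl
  have hlnn : 0 ≤ l := by positivity
  set μZ := Measure.map Z ℙ with hμZ
  set μX := gammaMeasure κ κ with hμX
  have hprobX : IsProbabilityMeasure μX := isProbabilityMeasure_gammaMeasure hκ hκ
  have hprobZ : IsProbabilityMeasure μZ := Measure.isProbabilityMeasure_map hZmeas.aemeasurable
  have hmap : Measure.map (fun ω => (Z ω, X ω)) ℙ = μZ.prod μX := by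
    have h := (ProbabilityTheory.indepFun_iff_map_prod_eq_prod_map_map
      hZmeas.aemeasurable hXmeas.aemeasurable).mp hindep
    rw [hXdist] at h
    exact h
  set f : ℝ × ℝ → ℝ := fun p => Real.exp (-(s * (p.1 * p.2 ^ (1/α)))) with hf
  have hfmeas : Measurable f := by
    apply Real.measurable_exp.comp
    exact ((measurable_fst.mul (measurable_snd.pow_const _)).const_mul s).neg
  have hX0 : μX (Set.Iio 0) = 0 := by
    rw [hμX, gammaMeasure, withDensity_apply _ measurableSet_Iio]
    exact lintegral_gammaPDF_of_nonpos le_rfl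
  have hZ0 : μZ (Set.Iio 0) = 0 := by
    rw [hμZ, Measure.map_apply hZmeas measurableSet_Iio]
    have : Z ⁻¹' (Set.Iio 0) = ∅ := by
      ext ω; simp only [Set.mem_preimage, Set.mem_Iio, Set.mem_empty_iff_false, iff_false, not_lt]
      exact (hZpos ω).le
    rw [this]; simp
  have haeX : ∀ᵐ x ∂μX, (0:ℝ) ≤ x := by
    rw [ae_iff]
    convert hX0 using 2
    ext x; simp [not_le]
  have haeP : ∀ᵐ p ∂(μZ.prod μX), 0 ≤ p.1 ∧ 0 ≤ p.2 := by
    have h1 : ∀ᵐ p ∂(μZ.prod μX), (0:ℝ) ≤ p.1 := by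
      rw [ae_iff]
      have he : {p : ℝ × ℝ | ¬ (0:ℝ) ≤ p.1} = Set.Iio 0 ×ˢ Set.univ := by
        ext p; simp [not_le]
      rw [he, Measure.prod_prod, hZ0, zero_mul]
    have h2 : ∀ᵐ p ∂(μZ.prod μX), (0:ℝ) ≤ p.2 := by
      rw [ae_iff]
      have he : {p : ℝ × ℝ | ¬ (0:ℝ) ≤ p.2} = Set.univ ×ˢ Set.Iio 0 := by
        ext p; simp [not_le]
      rw [he, Measure.prod_prod, hX0, mul_zero]
    exact h1.and h2
  have hint : Integrable f (μZ.prod μX) := by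
    apply Integrable.mono' (integrable_const (1:ℝ)) hfmeas.aestronglyMeasurable
    filter_upwards [haeP] with p hp
    have hr : 0 ≤ p.2 ^ (1/α) := Real.rpow_nonneg hp.2 _
    have ht : 0 ≤ s * (p.1 * p.2 ^ (1/α)) := by
      have := hp.1; positivity
    simp only [hf, Real.norm_eq_abs, Real.abs_exp]
    exact Real.exp_le_one_iff.mpr (by linarith)
  calc ∫ ω, Real.exp (-(s * (Z ω * X ω ^ (1/α))))
      = ∫ p, f p ∂(Measure.map (fun ω => (Z ω, X ω)) ℙ) :=
        (integral_map (hZmeas.prodMk hXmeas).aemeasurable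
          hfmeas.aestronglyMeasurable).symm
    _ = ∫ p, f p ∂(μZ.prod μX) := by rw [hmap]
    _ = ∫ x, (∫ z, f (z, x) ∂μZ) ∂μX := integral_prod_symm f hint
    _ = ∫ x, Real.exp (-(l * x)) ∂μX := by
        apply integral_congr_ae
        filter_upwards [haeX] with x hx
        have hrx : 0 ≤ x ^ (1/α) := Real.rpow_nonneg hx _
        have hsx : 0 ≤ s * x ^ (1/α) := by positivity
        have h2 : ∫ z, f (z, x) ∂μZ
            = ∫ ω, Real.exp (-((s * x ^ (1/α)) * Z ω)) := by
          have hgm : AEStronglyMeasurable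
              (fun z : ℝ => Real.exp (-(s * (z * x ^ (1/α))))) μZ :=
            (((measurable_id.mul_const (x ^ (1/α))).const_mul s).neg.exp).aestronglyMeasurable
          have hfe : (fun z : ℝ => f (z, x))
              = fun z : ℝ => Real.exp (-(s * (z * x ^ (1/α)))) := rfl
          rw [hfe, hμZ, integral_map hZmeas.aemeasurable hgm]
          have hfun : (fun ω : Ω => Real.exp (-(s * (Z ω * x ^ (1/α)))))
              = fun ω : Ω => Real.exp (-((s * x ^ (1/α)) * Z ω)) := by
            funext ω
            congr 1
            ring
          rw [hfun]
        rw [h2, hZlaplace _ hsx]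
        congr 1
        rw [Real.mul_rpow hs hrx, ← Real.rpow_mul hx, one_div,
          inv_mul_cancel₀ hα0.ne', Real.rpow_one, hl]
        ring
    _ = (1 + l / κ) ^ (-κ) := gamma_laplace hκ hlnn
    _ = (1 + (c / κ) * Real.Gamma (1 - α) * s ^ α) ^ (-κ) := by
        rw [show l / κ = (c/κ) * Real.Gamma (1-α) * s^α by rw [hl]; ring]
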